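/- Let n > 2 and let G be a subgroup of Equiv.Perm (Fin n) with s orbits on Fin n, of sizes n₁, n₂, …, n_s. Then the number of rack operations ▷ on Fin n whose operator group equals G is at most (3^((n−1)/2))^s · (n₁ · n₂ ⋯ n_s); in particular it is at most 3^(n²/2) · 3^n. -/

import Mathlib

/-- A rack: right multiplications are bijections, and self-distributivity holds. -/
def IsRack {X : Type*} (op : X → X → X) : Prop :=
  (∀ y : X, Function.Bijective fun x => op x y) ∧
  ∀ x y z : X, op (op x y) z = op (op x z) (op y z)

/-- The operator group of a binary operation: the subgroup of `Equiv.Perm X` generated by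
the permutations `x ↦ x ▷ y` for `y ∈ X`. -/
def OpGroup {X : Type*} (op : X → X → X) : Subgroup (Equiv.Perm X) :=
  Subgroup.closure {σ : Equiv.Perm X | ∃ y : X, ∀ x : X, σ x = op x y}


noncomputable def sq3 : ℝ := (3 : ℝ) ^ ((1 : ℝ)/2)

lemma sq3_nonneg : 0 ≤ sq3 := Real.rpow_nonneg (by norm_num) _

lemma one_le_sq3 : 1 ≤ sq3 := Real.one_le_rpow (by norm_num) (by norm_num)

lemma sq3_pow (k : ℕ) : sq3 ^ k = (3 : ℝ) ^ ((k : ℝ)/2) := by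
  rw [sq3, ← Real.rpow_natCast ((3:ℝ) ^ ((1:ℝ)/2)) k, ← Real.rpow_mul (by norm_num)]
  ring_nf

lemma sq_le_three_pow (k : ℕ) : k ^ 2 ≤ 3 ^ k := by
  induction k with
  | zero => norm_num
  | succ k ih =>
    have h3 : k < 3 ^ k := Nat.lt_pow_self (by norm_num)
    have : (k + 1) ^ 2 = k ^ 2 + 2 * k + 1 := by ring
    omega

lemma nat_le_sq3_pow (k : ℕ) : (k : ℝ) ≤ sq3 ^ k := by
  have h1 : ((k : ℝ)) ^ 2 ≤ (3 : ℝ) ^ k := by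
    have := sq_le_three_pow k
    exact_mod_cast this
  have h2 : (sq3 ^ k) ^ 2 = (3 : ℝ) ^ k := by
    rw [sq3_pow, ← Real.rpow_natCast ((3:ℝ) ^ ((k:ℝ)/2)) 2, ← Real.rpow_mul (by norm_num)]
    push_cast
    rw [div_mul_cancel₀ _ (by norm_num : (2:ℝ) ≠ 0)]
    exact Real.rpow_natCast 3 k
  have hb : 0 ≤ sq3 ^ k := pow_nonneg sq3_nonneg _
  nlinarith [h1, h2, hb]

open MulAction in
lemma aux_abelian {n : ℕ} (hn : 1 ≤ n) (A : Type*) [Group A] [Finite A]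
    (ρ : A →* Equiv.Perm (Fin n)) (hinj : Function.Injective ρ)
    (hcomm : ∀ a b : A, a * b = b * a)
    (x₀ : Fin n) (hfix : ∀ a, ρ a x₀ = x₀) :
    (Nat.card A : ℝ) ≤ sq3 ^ (n - 1) := by
  letI : MulAction A (Fin n) := MulAction.compHom (Fin n) ρ
  have hsmul : ∀ (a : A) (x : Fin n), a • x = ρ a x := fun a x => rfl
  letI Q := orbitRel.Quotient A (Fin n)
  letI : Fintype Q := Fintype.ofFinite _
  haveI : DecidableEq Q := Classical.decEq _
  -- injection of A into the product of orbits
  have hcard : Nat.card A ≤ ∏ o : Q, Nat.card (orbitRel.Quotient.orbit o) := by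
    rw [← Nat.card_pi]
    apply Nat.card_le_card_of_injective
      (fun a => fun o : Q => (⟨a • (Quotient.out o), by
        rw [orbitRel.Quotient.orbit_eq_orbit_out o Quotient.out_eq']
        exact mem_orbit _ _⟩ : (orbitRel.Quotient.orbit o)))
    intro a b hab
    have h1 : ∀ o : Q, a • (Quotient.out o) = b • (Quotient.out o) := by
      intro o
      exact Subtype.ext_iff.mp (congrFun hab o)
    have h2 : ∀ x : Fin n, a • x = b • x := by
      intro x
      obtain ⟨c, hc⟩ : x ∈ orbit A (Quotient.out (Quotient.mk'' x : Q)) := by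
        rw [← orbitRel.Quotient.orbit_eq_orbit_out _ Quotient.out_eq',
          orbitRel.Quotient.mem_orbit]
      rw [← hc, ← mul_smul, ← mul_smul, hcomm a c, hcomm b c, mul_smul, mul_smul,
        h1 (Quotient.mk'' x)]
    apply hinj
    ext x
    rw [← hsmul, ← hsmul, h2]
  -- the orbit of x₀ is a singleton
  have horb : orbitRel.Quotient.orbit (Quotient.mk'' x₀ : Q) = {x₀} := by
    rw [orbitRel.Quotient.orbit_mk]
    ext z
    constructor
    · rintro ⟨a, rfl⟩; simp [hsmul, hfix]
    · rintro rfl; exact mem_orbit_self _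
  have hcard1 : Nat.card (orbitRel.Quotient.orbit (Quotient.mk'' x₀ : Q)) = 1 := by
    rw [horb]; simp
  -- sum of orbit sizes is n
  haveI : ∀ o : Q, Fintype (orbitRel.Quotient.orbit o) := fun o => Fintype.ofFinite _
  have hsum : ∑ o : Q, Nat.card (orbitRel.Quotient.orbit o) = n := by
    calc ∑ o : Q, Nat.card (orbitRel.Quotient.orbit o)
        = ∑ o : Q, Fintype.card (orbitRel.Quotient.orbit o) :=
          Finset.sum_congr rfl fun o _ => Nat.card_eq_fintype_card
      _ = Fintype.card ((ω : Q) × (orbitRel.Quotient.orbit ω)) := (Fintype.card_sigma).symm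
      _ = Fintype.card (Fin n) := (Fintype.card_congr (selfEquivSigmaOrbits' A (Fin n))).symm
      _ = n := Fintype.card_fin n
  -- real bound
  calc (Nat.card A : ℝ) ≤ ∏ o : Q, (Nat.card (orbitRel.Quotient.orbit o) : ℝ) := by
        push_cast at hcard ⊢
        exact_mod_cast hcard
    _ = (Nat.card (orbitRel.Quotient.orbit (Quotient.mk'' x₀ : Q)) : ℝ) *
          ∏ o ∈ Finset.univ.erase (Quotient.mk'' x₀ : Q), (Nat.card (orbitRel.Quotient.orbit o) : ℝ) :=
        (Finset.mul_prod_erase _ _ (Finset.mem_univ _)).symm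
    _ ≤ ∏ o ∈ Finset.univ.erase (Quotient.mk'' x₀ : Q), sq3 ^ (Nat.card (orbitRel.Quotient.orbit o)) := by
        rw [hcard1, Nat.cast_one, one_mul]
        exact Finset.prod_le_prod (fun i _ => by positivity) (fun i _ => nat_le_sq3_pow _)
    _ = sq3 ^ (∑ o ∈ Finset.univ.erase (Quotient.mk'' x₀ : Q), Nat.card (orbitRel.Quotient.orbit o)) := by
        rw [Finset.prod_pow_eq_pow_sum]
    _ = sq3 ^ (n - 1) := by
        congr 1
        rw [← Finset.add_sum_erase _ (fun o : Q => Nat.card (orbitRel.Quotient.orbit o))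
          (Finset.mem_univ (Quotient.mk'' x₀ : Q))] at hsum
        rw [hcard1] at hsum
        exact Nat.eq_sub_of_add_eq' hsum

open MulAction in
lemma centralizer_card_le {n : ℕ} (hn : 1 ≤ n) (G : Subgroup (Equiv.Perm (Fin n))) (x₀ : Fin n) :
    (Nat.card (Subgroup.centralizer ((stabilizer G x₀ : Subgroup G) : Set G)) : ℝ) ≤
      sq3 ^ (n - 1) * Nat.card (orbit G x₀) := by
  set C := Subgroup.centralizer ((stabilizer G x₀ : Subgroup G) : Set G) with hC
  have h1 : Nat.card C = Nat.card (orbit C x₀) * Nat.card (stabilizer C x₀) := by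
    rw [← Nat.card_prod]
    exact (Nat.card_congr (MulAction.orbitProdStabilizerEquivGroup C x₀)).symm
  have h2 : Nat.card (orbit C x₀) ≤ Nat.card (orbit G x₀) := by
    apply Nat.card_mono (Set.toFinite _)
    rintro z ⟨c, rfl⟩
    exact ⟨(c : G), (Subgroup.smul_def c x₀).symm⟩
  have h3 : (Nat.card (stabilizer C x₀) : ℝ) ≤ sq3 ^ (n - 1) := by
    have hmem : ∀ a : stabilizer C x₀, ((a : C) : G) ∈ stabilizer G x₀ := by
      intro a
      have ha : (a : C) • x₀ = x₀ := a.2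
      rw [Subgroup.smul_def] at ha
      exact ha
    refine aux_abelian hn (stabilizer C x₀)
      (G.subtype.comp ((C.subtype).comp (stabilizer C x₀).subtype)) ?_ ?_ x₀ ?_
    · exact G.subtype_injective.comp ((C.subtype_injective).comp
        (stabilizer C x₀).subtype_injective)
    · intro a b
      have hb : ((b : C) : G) ∈ stabilizer G x₀ := hmem b
      have hac : ((a : C) : G) ∈ C := (a : C).2
      have := (Subgroup.mem_centralizer_iff.mp hac) _ hb
      exact Subtype.ext (Subtype.ext this.symm)
    · intro a
      have := hmem a
      rw [mem_stabilizer_iff, Subgroup.smul_def, Equiv.Perm.smul_def] at this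
      exact this
  calc (Nat.card C : ℝ) = (Nat.card (stabilizer C x₀) : ℝ) * Nat.card (orbit C x₀) := by
        rw [h1]; push_cast; ring
    _ ≤ sq3 ^ (n - 1) * Nat.card (orbit G x₀) := by
        apply mul_le_mul h3 (by exact_mod_cast h2) (by positivity) (pow_nonneg sq3_nonneg _)

open MulAction in
lemma rack_card_le (n : ℕ) (G : Subgroup (Equiv.Perm (Fin n))) :
    Nat.card {op : Fin n → Fin n → Fin n // IsRack op ∧ OpGroup op = G} ≤
      Nat.card {φ : Fin n → G // ∀ (g : G) (y : Fin n),
        φ ((g : Equiv.Perm (Fin n)) y) = g * φ y * g⁻¹} := by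
  classical
  let T := {op : Fin n → Fin n → Fin n // IsRack op ∧ OpGroup op = G}
  let perm : T → Fin n → Equiv.Perm (Fin n) := fun p y => Equiv.ofBijective _ (p.2.1.1 y)
  have perm_apply : ∀ (p : T) y x, perm p y x = p.1 x y := fun p y x => rfl
  have mem : ∀ (p : T) y, perm p y ∈ G := fun p y => by
    rw [← p.2.2]
    exact Subgroup.subset_closure ⟨y, fun x => rfl⟩
  have equivar : ∀ (p : T) (σ : Equiv.Perm (Fin n)), σ ∈ OpGroup p.1 →
      ∀ y, perm p (σ y) = σ * perm p y * σ⁻¹ := by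
    intro p σ hσ
    refine Subgroup.closure_induction ?_ ?_ ?_ ?_ hσ
    · rintro τ ⟨z, hz⟩ y
      ext x
      have h1 : perm p (τ y) x = p.1 x (p.1 y z) := by rw [perm_apply, hz]
      have h2 : (τ * perm p y * τ⁻¹) x = τ (p.1 (τ⁻¹ x) y) := by
        simp [Equiv.Perm.mul_apply, perm_apply]
      rw [h1, h2, hz, p.2.1.2 (τ⁻¹ x) y z, ← hz (τ⁻¹ x)]
      simp
    · intro y
      simp
    · intro σ τ _ _ hσ' hτ' y
      have : (σ * τ) y = σ (τ y) := rfl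
      rw [this, hσ' (τ y), hτ' y]
      group
    · intro σ _ hσ' y
      have h := hσ' (σ⁻¹ y)
      rw [show σ (σ⁻¹ y) = y from σ.apply_symm_apply y] at h
      rw [h]
      group
  apply Nat.card_le_card_of_injective
    (fun p : T => (⟨fun y => ⟨perm p y, mem p y⟩, by
      intro g y
      apply Subtype.ext
      push_cast
      exact equivar p (g : Equiv.Perm (Fin n)) (by rw [p.2.2]; exact g.2) y⟩ :
      {φ : Fin n → G // ∀ (g : G) (y : Fin n),
        φ ((g : Equiv.Perm (Fin n)) y) = g * φ y * g⁻¹}))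
  intro p q h
  simp only [Subtype.mk.injEq] at h
  apply Subtype.ext
  funext x y
  have := congrFun h y
  rw [Subtype.ext_iff] at this
  calc p.1 x y = perm p y x := rfl
    _ = perm q y x := by rw [show perm p y = perm q y from this]
    _ = q.1 x y := rfl

open MulAction in
lemma equivar_card_le (n : ℕ) (G : Subgroup (Equiv.Perm (Fin n))) :
    Nat.card {φ : Fin n → G // ∀ (g : G) (y : Fin n),
        φ ((g : Equiv.Perm (Fin n)) y) = g * φ y * g⁻¹} ≤
      Nat.card (∀ o : orbitRel.Quotient G (Fin n),
        Subgroup.centralizer ((stabilizer G (Quotient.out o) : Subgroup G) : Set G)) := by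
  classical
  apply Nat.card_le_card_of_injective
    (fun φp => fun o => (⟨φp.1 (Quotient.out o), by
      rw [Subgroup.mem_centralizer_iff]
      intro h hh
      have hfix : (h : Equiv.Perm (Fin n)) (Quotient.out o) = Quotient.out o := by
        have := mem_stabilizer_iff.mp hh
        rw [Subgroup.smul_def, Equiv.Perm.smul_def] at this
        exact this
      have h1 := φp.2 h (Quotient.out o)
      rw [hfix] at h1
      conv_rhs => rw [h1]
      group⟩ : Subgroup.centralizer ((stabilizer G (Quotient.out o) : Subgroup G) : Set G)))
  intro φp ψp h
  simp only [Subtype.mk.injEq] at h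
  apply Subtype.ext
  funext y
  have hrep : ∀ o : orbitRel.Quotient G (Fin n), φp.1 (Quotient.out o) = ψp.1 (Quotient.out o) := by
    intro o
    have := congrFun h o
    rwa [Subtype.ext_iff] at this
  obtain ⟨g, hg⟩ : y ∈ orbit G (Quotient.out (Quotient.mk'' y : orbitRel.Quotient G (Fin n))) := by
    rw [← orbitRel.Quotient.orbit_eq_orbit_out _ Quotient.out_eq', orbitRel.Quotient.mem_orbit]
  replace hg : g • (Quotient.out (Quotient.mk'' y : orbitRel.Quotient G (Fin n))) = y := hg
  have hg' : (g : Equiv.Perm (Fin n)) (Quotient.out (Quotient.mk'' y : orbitRel.Quotient G (Fin n))) = y := by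
    rw [← Equiv.Perm.smul_def, ← Subgroup.smul_def]; exact hg
  rw [← hg', φp.2, ψp.2, hrep]

open MulAction in
lemma sum_card_orbits (A : Type*) [Group A] (β : Type*) [Finite β] [MulAction A β]
    [Fintype (orbitRel.Quotient A β)] :
    ∑ o : orbitRel.Quotient A β, Nat.card (orbitRel.Quotient.orbit o) = Nat.card β := by
  haveI : ∀ o : orbitRel.Quotient A β, Fintype (orbitRel.Quotient.orbit o) :=
    fun o => Fintype.ofFinite _
  haveI : Fintype β := Fintype.ofFinite _
  calc ∑ o : orbitRel.Quotient A β, Nat.card (orbitRel.Quotient.orbit o)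
      = ∑ o : orbitRel.Quotient A β, Fintype.card (orbitRel.Quotient.orbit o) :=
        Finset.sum_congr rfl fun o _ => Nat.card_eq_fintype_card
    _ = Fintype.card ((ω : orbitRel.Quotient A β) × (orbitRel.Quotient.orbit ω)) :=
        (Fintype.card_sigma).symm
    _ = Fintype.card β := (Fintype.card_congr (selfEquivSigmaOrbits' A β)).symm
    _ = Nat.card β := Nat.card_eq_fintype_card.symm

open MulAction

theorem rack_count_with_operator_group (n : ℕ) (hn : 2 < n)
    (G : Subgroup (Equiv.Perm (Fin n))) :
    (Nat.card {op : Fin n → Fin n → Fin n // IsRack op ∧ OpGroup op = G} : ℝ) ≤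
        ((3 : ℝ) ^ (((n : ℝ) - 1) / 2)) ^ Nat.card (MulAction.orbitRel.Quotient G (Fin n)) *
          ∏ᶠ o : MulAction.orbitRel.Quotient G (Fin n),
            (Nat.card (MulAction.orbitRel.Quotient.orbit o) : ℝ) ∧
    (Nat.card {op : Fin n → Fin n → Fin n // IsRack op ∧ OpGroup op = G} : ℝ) ≤
        (3 : ℝ) ^ ((n : ℝ) ^ 2 / 2) * 3 ^ n := by
  classical
  have hn1 : 1 ≤ n := by omega
  letI : Fintype (orbitRel.Quotient G (Fin n)) := Fintype.ofFinite _
  have hmain : (Nat.card {op : Fin n → Fin n → Fin n // IsRack op ∧ OpGroup op = G} : ℝ) ≤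
      ∏ o : orbitRel.Quotient G (Fin n),
        (Nat.card (Subgroup.centralizer
          ((stabilizer G (Quotient.out o) : Subgroup G) : Set G)) : ℝ) := by
    have h1 := (rack_card_le n G).trans (equivar_card_le n G)
    rw [Nat.card_pi] at h1
    exact_mod_cast h1
  have horb : ∀ o : orbitRel.Quotient G (Fin n),
      Nat.card (orbit G (Quotient.out o)) = Nat.card (orbitRel.Quotient.orbit o) := by
    intro o
    rw [orbitRel.Quotient.orbit_eq_orbit_out o Quotient.out_eq']
  have hstep : (Nat.card {op : Fin n → Fin n → Fin n // IsRack op ∧ OpGroup op = G} : ℝ) ≤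
      ∏ o : orbitRel.Quotient G (Fin n),
        (sq3 ^ (n - 1) * (Nat.card (orbitRel.Quotient.orbit o) : ℝ)) := by
    refine hmain.trans (Finset.prod_le_prod (fun i _ => by positivity) (fun o _ => ?_))
    have := centralizer_card_le hn1 G (Quotient.out o)
    rwa [horb o] at this
  rw [Finset.prod_mul_distrib, Finset.prod_const] at hstep
  have hsq3 : sq3 ^ (n - 1) = (3:ℝ) ^ (((n:ℝ) - 1)/2) := by
    rw [sq3_pow]
    congr 1
    rw [Nat.cast_sub hn1, Nat.cast_one]
  have hcardQ : (Finset.univ : Finset (orbitRel.Quotient G (Fin n))).card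
      = Nat.card (orbitRel.Quotient G (Fin n)) := by
    rw [Finset.card_univ, Nat.card_eq_fintype_card]
  have hfin : ∏ᶠ o : orbitRel.Quotient G (Fin n), (Nat.card (orbitRel.Quotient.orbit o) : ℝ)
      = ∏ o : orbitRel.Quotient G (Fin n), (Nat.card (orbitRel.Quotient.orbit o) : ℝ) :=
    finprod_eq_prod_of_fintype _
  have first : (Nat.card {op : Fin n → Fin n → Fin n // IsRack op ∧ OpGroup op = G} : ℝ) ≤
      ((3 : ℝ) ^ (((n : ℝ) - 1) / 2)) ^ Nat.card (orbitRel.Quotient G (Fin n)) *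
        ∏ᶠ o : orbitRel.Quotient G (Fin n), (Nat.card (orbitRel.Quotient.orbit o) : ℝ) := by
    rw [hfin, ← hsq3, ← hcardQ]
    exact hstep
  refine ⟨first, first.trans ?_⟩
  -- second bound
  have hsum : ∑ o : orbitRel.Quotient G (Fin n), Nat.card (orbitRel.Quotient.orbit o) = n := by
    rw [sum_card_orbits G (Fin n), Nat.card_eq_fintype_card, Fintype.card_fin]
  have hsq3le : sq3 ≤ 3 := by
    rw [sq3]
    calc (3:ℝ) ^ ((1:ℝ)/2) ≤ (3:ℝ) ^ (1:ℝ) :=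
          Real.rpow_le_rpow_of_exponent_le (by norm_num) (by norm_num)
      _ = 3 := Real.rpow_one 3
  have hP : ∏ᶠ o : orbitRel.Quotient G (Fin n), (Nat.card (orbitRel.Quotient.orbit o) : ℝ)
      ≤ 3 ^ n := by
    rw [hfin]
    calc ∏ o : orbitRel.Quotient G (Fin n), (Nat.card (orbitRel.Quotient.orbit o) : ℝ)
        ≤ ∏ o : orbitRel.Quotient G (Fin n), sq3 ^ (Nat.card (orbitRel.Quotient.orbit o)) :=
          Finset.prod_le_prod (fun i _ => by positivity) (fun o _ => nat_le_sq3_pow _)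
      _ = sq3 ^ (∑ o : orbitRel.Quotient G (Fin n), Nat.card (orbitRel.Quotient.orbit o)) :=
          Finset.prod_pow_eq_pow_sum _ _ _
      _ = sq3 ^ n := by rw [hsum]
      _ ≤ 3 ^ n := pow_le_pow_left₀ sq3_nonneg hsq3le n
  have hs : Nat.card (orbitRel.Quotient G (Fin n)) ≤ n := by
    have := Nat.card_le_card_of_surjective
      (Quotient.mk'' : Fin n → orbitRel.Quotient G (Fin n))
      (fun q => ⟨Quotient.out q, Quotient.out_eq' q⟩)
    rwa [Nat.card_eq_fintype_card (α := Fin n), Fintype.card_fin] at this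
  have hA : ((3 : ℝ) ^ (((n : ℝ) - 1) / 2)) ^ Nat.card (orbitRel.Quotient G (Fin n))
      ≤ (3:ℝ) ^ ((n : ℝ) ^ 2 / 2) := by
    have h1le : (1:ℝ) ≤ (3:ℝ) ^ (((n : ℝ) - 1) / 2) := by
      apply Real.one_le_rpow (by norm_num)
      have : (1:ℝ) ≤ (n:ℝ) := by exact_mod_cast hn1
      linarith
    calc ((3 : ℝ) ^ (((n : ℝ) - 1) / 2)) ^ Nat.card (orbitRel.Quotient G (Fin n))
        ≤ ((3 : ℝ) ^ (((n : ℝ) - 1) / 2)) ^ n := pow_le_pow_right₀ h1le hs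
      _ = (3:ℝ) ^ ((((n : ℝ) - 1) / 2) * n) := by
          rw [← Real.rpow_natCast ((3:ℝ) ^ (((n : ℝ) - 1) / 2)) n,
            ← Real.rpow_mul (by norm_num)]
      _ ≤ (3:ℝ) ^ ((n : ℝ) ^ 2 / 2) := by
          apply Real.rpow_le_rpow_of_exponent_le (by norm_num)
          have h0 : (0:ℝ) ≤ (n:ℝ) := Nat.cast_nonneg n
          nlinarith
  have hPnn : (0:ℝ) ≤ ∏ᶠ o : orbitRel.Quotient G (Fin n),
      (Nat.card (orbitRel.Quotient.orbit o) : ℝ) := by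
    rw [hfin]; positivity
  exact mul_le_mul hA hP hPnn (Real.rpow_nonneg (by norm_num) _)
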